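/- Let (q_{k,j})_{k,j ∈ ℕ₀} be nonnegative reals such that for each k, Σ_j q_{k,j} = 1 and Σ_j j·q_{k,j} = 1, the sequence (q_{k,0})_k is nondecreasing, and there exists g > 0 such that for every k and every J ∈ ℕ, q_{k+1,0} ≥ q_{k,0} + g^J·(q_{k,1} + ⋯ + q_{k,J}). Then lim_{k→∞} q_{k,0} = 1. -/

import Mathlib

open Filter
open scoped BigOperators

/-- the analytic core of the extinction lemma.  If `q k j ≥ 0` with
`Σ_j q k j = 1`, `Σ_j j·q k j = 1`, `k ↦ q k 0` nondecreasing, and there is `g > 0`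
with `q (k+1) 0 ≥ q k 0 + g^J·(q k 1 + ⋯ + q k J)` for all `k` and `J ≥ 1`, then
`q k 0 → 1`. -/
theorem extinction_analytic_core
    (q : ℕ → ℕ → ℝ) (hnn : ∀ k j, 0 ≤ q k j)
    (hsum : ∀ k, Summable (q k)) (htot : ∀ k, ∑' j, q k j = 1)
    (hmsum : ∀ k, Summable (fun j : ℕ => (j : ℝ) * q k j))
    (hmean : ∀ k, ∑' j : ℕ, (j : ℝ) * q k j = 1)
    (hmono : Monotone fun k => q k 0)
    (g : ℝ) (hg : 0 < g)
    (hstep : ∀ k J, 1 ≤ J → q k 0 + g ^ J * ∑ j ∈ Finset.Icc 1 J, q k j ≤ q (k + 1) 0) :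
    Tendsto (fun k => q k 0) atTop (nhds 1) := by
  have hle1 : ∀ k, q k 0 ≤ 1 := by
    intro k
    rw [← htot k]
    exact Summable.le_tsum (hsum k) 0 fun j _ => hnn k j
  have hbdd : BddAbove (Set.range fun k => q k 0) := ⟨1, by rintro x ⟨k, rfl⟩; exact hle1 k⟩
  set L := ⨆ k, q k 0 with hLdef
  have htend : Tendsto (fun k => q k 0) atTop (nhds L) := tendsto_atTop_ciSup hmono hbdd
  have hLle : ∀ k, q k 0 ≤ L := fun k => le_ciSup hbdd k
  have hL1 : L ≤ 1 := ciSup_le hle1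
  rcases eq_or_lt_of_le hL1 with h | h
  · rwa [h] at htend
  exfalso
  -- tail bound
  have tail : ∀ (k : ℕ) (J : ℕ), 1 ≤ J → 1 - q k 0 - 1/(J:ℝ) ≤ ∑ j ∈ Finset.Icc 1 J, q k j := by
    intro k J hJ
    have hJpos : (0:ℝ) < (J:ℝ) := by exact_mod_cast hJ
    have hshift : Summable (fun j => q k (j + (J+1))) :=
      (summable_nat_add_iff (J+1)).2 (hsum k)
    have h1 : (∑ j ∈ Finset.range (J+1), q k j) + ∑' j, q k (j + (J+1)) = 1 := by
      rw [Summable.sum_add_tsum_nat_add (J+1) (hsum k), htot k]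
    have hrange : ∑ j ∈ Finset.range (J+1), q k j
        = q k 0 + ∑ j ∈ Finset.Icc 1 J, q k j := by
      rw [Finset.sum_range_succ' (fun j => q k j) J]
      have : ∑ j ∈ Finset.Icc 1 J, q k j = ∑ i ∈ Finset.range J, q k (i + 1) := by
        rw [← Finset.Ico_add_one_right_eq_Icc, Finset.sum_Ico_eq_sum_range]
        simp [add_comm]
      rw [this]; ring
    have htail : ∑' j, q k (j + (J+1)) ≤ 1/(J:ℝ) := by
      have hmshift : Summable (fun j : ℕ => ((j + (J+1) : ℕ) : ℝ) * q k (j + (J+1))) :=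
        (summable_nat_add_iff (f := fun j : ℕ => (j:ℝ) * q k j) (J+1)).2 (hmsum k)
      have h2 : (∑ j ∈ Finset.range (J+1), (j:ℝ) * q k j)
          + ∑' j, ((j + (J+1) : ℕ) : ℝ) * q k (j + (J+1)) = 1 := by
        rw [Summable.sum_add_tsum_nat_add (f := fun j : ℕ => (j:ℝ) * q k j) (J+1) (hmsum k), hmean k]
      have hfirst : 0 ≤ ∑ j ∈ Finset.range (J+1), (j:ℝ) * q k j :=
        Finset.sum_nonneg fun j _ => mul_nonneg (Nat.cast_nonneg j) (hnn k j)
      have h3 : (J:ℝ) * ∑' j, q k (j + (J+1))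
          ≤ ∑' j, ((j + (J+1) : ℕ) : ℝ) * q k (j + (J+1)) := by
        rw [← tsum_mul_left]
        refine Summable.tsum_le_tsum (fun j => ?_) (hshift.mul_left _) hmshift
        have hc : (J:ℝ) ≤ ((j + (J+1) : ℕ) : ℝ) := by
          exact_mod_cast (by omega : J ≤ j + (J+1))
        exact mul_le_mul_of_nonneg_right hc (hnn k _)
      rw [le_div_iff₀ hJpos, mul_comm]
      linarith
    linarith
  -- choose J large
  have h1L : 0 < 1 - L := by linarith
  obtain ⟨J, hJgt⟩ := exists_nat_gt (2/(1-L))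
  have hJ1 : 1 ≤ J := by
    by_contra hc
    push_neg at hc
    interval_cases J
    · simp at hJgt
      have : 0 < 2/(1-L) := by positivity
      linarith
  have hJpos : (0:ℝ) < (J:ℝ) := by exact_mod_cast hJ1
  have hinv : 1/(J:ℝ) < (1-L)/2 := by
    rw [div_lt_div_iff₀ hJpos (by norm_num : (0:ℝ) < 2)]
    rw [div_lt_iff₀ h1L] at hJgt
    linarith
  set δ := g ^ J * ((1-L)/2) with hδdef
  have hδpos : 0 < δ := by positivity
  have hstep' : ∀ k, q k 0 + δ ≤ q (k+1) 0 := by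
    intro k
    have ht := tail k J hJ1
    have hs := hstep k J hJ1
    have hsum_ge : (1-L)/2 ≤ ∑ j ∈ Finset.Icc 1 J, q k j := by
      have := hLle k
      linarith
    have : δ ≤ g ^ J * ∑ j ∈ Finset.Icc 1 J, q k j :=
      mul_le_mul_of_nonneg_left hsum_ge (by positivity)
    linarith
  have key : ∀ n : ℕ, q 0 0 + n * δ ≤ q n 0 := by
    intro n
    induction n with
    | zero => simp
    | succ n ih =>
      have := hstep' n
      push_cast
      linarith
  obtain ⟨n, hn⟩ := exists_nat_gt ((1 - q 0 0)/δ)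
  have : (1 - q 0 0) < n * δ := by
    rw [div_lt_iff₀ hδpos] at hn
    linarith
  have := key n
  have := hle1 n
  linarith
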